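/- With notation as above, the expected improvement E[max(0, T − Y)] for Y ~ N(ŷ, s²), s > 0, is strictly positive for all values of ŷ and T, and is a strictly increasing function of s when ŷ ≥ T. -/

import Mathlib

open MeasureTheory ProbabilityTheory

/-- Expected improvement of a Gaussian prediction `N(yhat, s²)` over target `T`. -/
noncomputable def expectedImprovement (yhat s T : ℝ) : ℝ :=
  ∫ y, max 0 (T - y) ∂(gaussianReal yhat (Real.toNNReal (s ^ 2)))

open Real
noncomputable def stdG : Measure ℝ := gaussianReal 0 1

instance : IsProbabilityMeasure stdG := by
  rw [stdG]; infer_instance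

lemma stdG_integrable_abs : Integrable (fun z : ℝ => |z|) stdG := by
  rw [stdG, gaussianReal_of_var_ne_zero 0 one_ne_zero,
    integrable_withDensity_iff (measurable_gaussianPDF 0 1)
      (Filter.Eventually.of_forall fun x => ENNReal.ofReal_lt_top)]
  have : ∀ x : ℝ, |x| * (gaussianPDF 0 1 x).toReal
      = (√(2 * π))⁻¹ * (|x| * Real.exp (-(2⁻¹ : ℝ) * x ^ 2)) := by
    intro x
    rw [gaussianPDF, ENNReal.toReal_ofReal (gaussianPDFReal_nonneg _ _ _), gaussianPDFReal]
    push_cast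
    ring_nf
  simp_rw [this]
  refine Integrable.const_mul ?_ _
  have h := integrable_mul_exp_neg_mul_sq (b := 2⁻¹) (by norm_num)
  refine h.abs.congr (Filter.Eventually.of_forall fun x => ?_)
  simp only [abs_mul, abs_of_nonneg (Real.exp_pos _).le]

lemma stdG_integrable_max (c s : ℝ) :
    Integrable (fun z : ℝ => max 0 (c - s * z)) stdG := by
  have hmeas : AEStronglyMeasurable (fun z : ℝ => max 0 (c - s * z)) stdG :=
    (continuous_const.max (continuous_const.sub (continuous_const.mul continuous_id))).aestronglyMeasurable
  have hbound : Integrable (fun z : ℝ => |c| + |s| * |z|) stdG :=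
    (integrable_const _).add (stdG_integrable_abs.const_mul _)
  refine hbound.mono hmeas (Filter.Eventually.of_forall fun z => ?_)
  rw [Real.norm_eq_abs, Real.norm_eq_abs]
  rw [abs_of_nonneg (le_max_left _ _)]
  rcases le_total (c - s * z) 0 with h | h
  · rw [max_eq_left h]
    positivity
  · rw [max_eq_right h]
    calc c - s * z ≤ |c - s * z| := le_abs_self _
    _ ≤ |c| + |s * z| := abs_sub _ _
    _ = |c| + |s| * |z| := by rw [abs_mul]
    _ ≤ |(|c| + |s| * |z|)| := le_abs_self _

lemma gaussian_eq_map (yhat s : ℝ) (hs : 0 < s) :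
    gaussianReal yhat (Real.toNNReal (s ^ 2)) = stdG.map (fun z => s * z + yhat) := by
  have h1 : stdG.map (fun z => s * z) = gaussianReal 0 (NNReal.mk (s ^ 2) (sq_nonneg s)) := by
    have := gaussianReal_map_const_mul (μ := 0) (v := 1) s
    simpa [stdG] using this
  have h2 : (fun z : ℝ => s * z + yhat) = (fun y : ℝ => y + yhat) ∘ (fun z : ℝ => s * z) := rfl
  rw [h2, ← Measure.map_map (measurable_id'.add_const _) (measurable_const_mul s), h1,
    gaussianReal_map_add_const, zero_add]
  congr 1
  ext
  simp [Real.toNNReal, max_eq_left (sq_nonneg s)]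

lemma ei_eq (yhat s T : ℝ) (hs : 0 < s) :
    expectedImprovement yhat s T = ∫ z, max 0 ((T - yhat) - s * z) ∂stdG := by
  rw [expectedImprovement, gaussian_eq_map yhat s hs,
    integral_map ((measurable_const_mul s).add_const yhat).aemeasurable (f := fun y : ℝ => max 0 (T - y))
      (continuous_const.max (continuous_const.sub continuous_id')).aestronglyMeasurable]
  congr 1 with z
  ring_nf

lemma stdG_Iio_pos (a : ℝ) : 0 < stdG (Set.Iio a) := by
  rw [pos_iff_ne_zero]
  intro h0
  have h1 : volume (Set.Iio a) = 0 := by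
    refine gaussianReal_absolutelyContinuous' 0 one_ne_zero ?_
    rwa [stdG] at h0
  simp [Real.volume_Iio] at h1

theorem expected_improvement_pos_and_mono (yhat T : ℝ) :
    (∀ s : ℝ, 0 < s → 0 < expectedImprovement yhat s T) ∧
    (T ≤ yhat →
      StrictMonoOn (fun s : ℝ => expectedImprovement yhat s T) (Set.Ioi 0)) := by
  constructor
  · intro s hs
    rw [ei_eq yhat s T hs]
    rw [integral_pos_iff_support_of_nonneg (f := fun z : ℝ => max 0 ((T - yhat) - s * z))
      (fun z => le_max_left _ _)
      (stdG_integrable_max (T - yhat) s)]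
    refine lt_of_lt_of_le (stdG_Iio_pos ((T - yhat) / s)) (measure_mono fun z hz => ?_)
    have hlt : 0 < (T - yhat) - s * z := by
      rw [sub_pos]
      calc s * z < s * ((T - yhat) / s) := mul_lt_mul_of_pos_left hz hs
        _ = T - yhat := by field_simp
    simp only [Function.mem_support]
    rw [max_eq_right hlt.le]
    exact hlt.ne'
  · intro hT s1 hs1 s2 hs2 h12
    simp only [Set.mem_Ioi] at hs1 hs2
    simp only
    rw [ei_eq yhat s1 T hs1, ei_eq yhat s2 T hs2]
    have hcle : T - yhat ≤ 0 := sub_nonpos.mpr hT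
    have hfi : Integrable (fun z : ℝ => max 0 ((T - yhat) - s1 * z)) stdG :=
      stdG_integrable_max (T - yhat) s1
    have hgi : Integrable (fun z : ℝ => max 0 ((T - yhat) - s2 * z)) stdG :=
      stdG_integrable_max (T - yhat) s2
    have hd : ∀ z : ℝ, 0 ≤ max 0 ((T - yhat) - s2 * z) - max 0 ((T - yhat) - s1 * z) := by
      intro z
      rw [sub_nonneg]
      rcases le_or_gt z 0 with hz | hz
      · exact max_le_max le_rfl (by nlinarith)
      · have h1 : (T - yhat) - s1 * z ≤ 0 := by nlinarith
        have h2 : (T - yhat) - s2 * z ≤ 0 := by nlinarith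
        rw [max_eq_left h1, max_eq_left h2]
    have hpos : 0 < ∫ z, (max 0 ((T - yhat) - s2 * z) - max 0 ((T - yhat) - s1 * z)) ∂stdG := by
      rw [integral_pos_iff_support_of_nonneg hd (hgi.sub hfi)]
      refine lt_of_lt_of_le (stdG_Iio_pos (min ((T - yhat) / s2) 0))
        (measure_mono fun z hz => ?_)
      have hz2 : z < (T - yhat) / s2 := lt_of_lt_of_le hz (min_le_left _ _)
      have hz0 : z < 0 := lt_of_lt_of_le hz (min_le_right _ _)
      have hgz : 0 < (T - yhat) - s2 * z := by
        rw [sub_pos]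
        calc s2 * z < s2 * ((T - yhat) / s2) := mul_lt_mul_of_pos_left hz2 hs2
          _ = T - yhat := by field_simp
      have hlt : max 0 ((T - yhat) - s1 * z) < max 0 ((T - yhat) - s2 * z) := by
        rcases le_or_gt ((T - yhat) - s1 * z) 0 with h1 | h1
        · rw [max_eq_left h1, max_eq_right hgz.le]; exact hgz
        · rw [max_eq_right h1.le, max_eq_right hgz.le]
          nlinarith
      simp only [Function.mem_support]
      exact (sub_pos.mpr hlt).ne'
    rw [integral_sub hgi hfi] at hpos
    linarith
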